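/- arXiv:2508.18707 — 2 statements merged into one kernel-verified Lean document; each statement's English description precedes it below -/
import Mathlib

section
/- For each r ∈ {1,2,3,4,5}: if m ∈ ℕ⁺ and real coefficients a_{ij}, b_i, c_i satisfy the rth-order conditions of Table 1 (conditions (1)–(4) for r = 1; (1)–(5) for r = 2; (1)–(7) for r = 3; (1)–(11) for r = 4; (1)–(20) for r = 5), then the simplified order condition C(r) holds: A_i^m([ ]_0) = 0 for every i = 0, 1, …, m, and A_0^m(Υ) = 0 for every ULN-tree Υ ∈ T_{r−}. -/
/-- LN-trees: finite rooted trees whose nodes carry natural-number labels and whose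
children are ordered. `LNTree.node k ys` is the tree `(Υ₁⋯Υ_l)_k` (for `ys = []` it is
the single node `[ ]_k`). -/
inductive LNTree : Type where
  | node : ℕ → List LNTree → LNTree

/-- The sets `T̃^q` of LN-trees: `T̃⁰ = ∅`, `T̃¹` consists of the single nodes, and for
`q ≥ 2`, `T̃^q` consists of trees `(Υ₁⋯Υ_l)_k` with all `Υ_i ∈ ⋃_{j=1}^{q-1} T̃^j`. -/
def LNlevel : ℕ → Set LNTree
  | 0 => ∅
  | 1 => { t | ∃ k : ℕ, t = LNTree.node k [] }
  | q + 2 => { t | ∃ (k : ℕ) (ys : List LNTree), t = LNTree.node k ys ∧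
      ∀ y ∈ ys, ∃ j : Fin (q + 2), 1 ≤ (j : ℕ) ∧ y ∈ LNlevel j }
decreasing_by exact j.isLt

/-- Equivalence of LN-trees: `(Υ₁⋯Υ_l)_k ~ (Υ'₁⋯Υ'_{l'})_{k'}` iff `k = k'`, `l = l'` and
there is a permutation pairing the children, i.e. a bijection `σ` of the index sets with
`Υ_{σ i} ~ Υ'_i` for all `i` (for `l = l' = 0` this is `[ ]_k ~ [ ]_{k'}` iff `k = k'`). -/
inductive LNEquiv : LNTree → LNTree → Prop where
  | node (k : ℕ) (ys zs : List LNTree) (σ : Fin zs.length ≃ Fin ys.length)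
      (h : ∀ i : Fin zs.length, LNEquiv (ys.get (σ i)) (zs.get i)) :
      LNEquiv (LNTree.node k ys) (LNTree.node k zs)

/-- The root number of an LN-tree. -/
def LNTree.rootNum : LNTree → ℕ
  | .node k _ => k

/-- The order of an LN-tree: `|[ ]_k| = 1 + k`,
`|(Υ₁⋯Υ_l)_k| = 1 + k + ∑ᵢ |Υᵢ|`. -/
def LNTree.order : LNTree → ℕ
  | .node k ys => 1 + k + (ys.attach.map (fun y => LNTree.order y.1)).sum
decreasing_by simp only [LNTree.node.sizeOf_spec]; have := List.sizeOf_lt_of_mem y.2; omega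

/-- `N_P(Υ₁,…,Υ_l)`: the number of permutations `σ` of the indices with
`Υ_{σ i} = Υ_i` for all `i`. -/
noncomputable def NP (ys : List LNTree) : ℕ :=
  Nat.card { σ : Equiv.Perm (Fin ys.length) // ∀ i, ys.get (σ i) = ys.get i }

/-- The symmetry order of an LN-tree: `S([ ]_k) = 1`,
`S((Υ₁⋯Υ_l)_k) = N_P ⬝ ∏ᵢ S(Υᵢ)`. -/
noncomputable def LNTree.symOrder : LNTree → ℕ
  | .node _ ys => NP ys * (ys.attach.map (fun y => LNTree.symOrder y.1)).prod
decreasing_by simp only [LNTree.node.sizeOf_spec]; have := List.sizeOf_lt_of_mem y.2; omega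

/-- The factorial of an LN-tree: `γ([ ]_k) = k!`,
`γ((Υ₁⋯Υ_l)_k) = k! ⬝ l! ⬝ ∏ᵢ γ(Υᵢ)`. -/
def LNTree.factGamma : LNTree → ℕ
  | .node k ys =>
      Nat.factorial k * Nat.factorial ys.length *
        (ys.attach.map (fun y => LNTree.factGamma y.1)).prod
decreasing_by simp only [LNTree.node.sizeOf_spec]; have := List.sizeOf_lt_of_mem y.2; omega

open Finset in
/-- The elementary coefficients `A_j^m(Υ)` of an LN-tree, given Runge–Kutta
coefficients `a_{ij}` (1 ≤ i,j ≤ m), `b_j` (1 ≤ j ≤ m) and `c_i` (0 ≤ i ≤ m):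
for the single node `[ ]_k`,
`A_i^m = ∑_j a_{ij}(c_i−c_j)^k − c_i^{k+1}/(k+1)` and
`A_0^m = ∑_j b_j(c_0−c_j)^k − 1/(k+1)`; for `(Υ₁⋯Υ_l)_k` with `l ≥ 1`,
`A_i^m = ∑_j a_{ij}(c_i−c_j)^k ∏_p A_j^m(Υ_p)` and
`A_0^m = ∑_j b_j(c_0−c_j)^k ∏_p A_j^m(Υ_p)`. -/
noncomputable def elemCoeff (m : ℕ) (a : ℕ → ℕ → ℝ) (b c : ℕ → ℝ) : ℕ → LNTree → ℝ
  | i, .node k [] =>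
      if i = 0 then
        (∑ j ∈ Icc 1 m, b j * (c 0 - c j) ^ k) - 1 / ((k : ℝ) + 1)
      else
        (∑ j ∈ Icc 1 m, a i j * (c i - c j) ^ k) - (c i) ^ (k + 1) / ((k : ℝ) + 1)
  | i, .node k (y₀ :: ys) =>
      if i = 0 then
        ∑ j ∈ Icc 1 m, b j * (c 0 - c j) ^ k *
          (((y₀ :: ys).attach).map (fun y => elemCoeff m a b c j y.1)).prod
      else
        ∑ j ∈ Icc 1 m, a i j * (c i - c j) ^ k *
          (((y₀ :: ys).attach).map (fun y => elemCoeff m a b c j y.1)).prod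
termination_by i t => sizeOf t
decreasing_by
  all_goals simp only [LNTree.node.sizeOf_spec]; have := List.sizeOf_lt_of_mem y.2; omega

/-- The ULN-tree (equivalence class) `⟦Υ⟧ = {Υ' : Υ' ~ Υ}` of an LN-tree. -/
def eqClass (t : LNTree) : Set LNTree := { t' | LNEquiv t' t }

/-- A set of LN-trees is a ULN-tree iff it is an equivalence class of `~`. -/
def IsULN (S : Set LNTree) : Prop := ∃ t : LNTree, S = eqClass t

/-- The set `(⟦Υ₁⟧⋯⟦Υ_l⟧)_k := { Υ : Υ ~ (Υ'₁⋯Υ'_l)_k for some Υ'_i ∈ ⟦Υ_i⟧ }`,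
for representatives `ts = [Υ₁,…,Υ_l]`. -/
def classJoin (k : ℕ) (ts : List LNTree) : Set LNTree :=
  { t | ∃ (ys : List LNTree) (h : ys.length = ts.length),
      (∀ i : Fin ys.length, ys.get i ∈ eqClass (ts.get (Fin.cast h i))) ∧
      LNEquiv t (LNTree.node k ys) }

/-- The branch relation on LN-trees: `[ ]_k` has no branches, and `Υ'` is a branch of
`(Υ₁⋯Υ_l)_k` iff `Υ' = Υ_i` for some `i` or `Υ'` is a branch of some `Υ_i`. -/
inductive IsBranch : LNTree → LNTree → Prop where
  | mem {t : LNTree} {k : ℕ} {ys : List LNTree} :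
      t ∈ ys → IsBranch t (LNTree.node k ys)
  | trans {t y : LNTree} {k : ℕ} {ys : List LNTree} :
      y ∈ ys → IsBranch t y → IsBranch t (LNTree.node k ys)

/-- The branch relation descended to ULN-trees (equivalence classes). -/
def ULNBranch (S' S : Set LNTree) : Prop :=
  ∃ t' t : LNTree, S' = eqClass t' ∧ S = eqClass t ∧ IsBranch t' t

open Finset in
/-- The conditions of Table 1, numbered `1`–`20`, for Runge–Kutta coefficients
`a_{ij}` (1 ≤ i,j ≤ m), `b_i` (1 ≤ i ≤ m) and `c_i` (0 ≤ i ≤ m). -/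
def tableCond (m : ℕ) (a : ℕ → ℕ → ℝ) (b c : ℕ → ℝ) : ℕ → Prop
  | 1 => c m = 0 ∧ c 0 = 1 ∧ ∀ i, 1 ≤ i → i ≤ m → c i < c (i - 1)
  | 2 => ∀ i j, 1 ≤ j → j ≤ i → i ≤ m → a i j = 0
  | 3 => ∀ i, 1 ≤ i → i ≤ m → c i = ∑ j ∈ Icc 1 m, a i j
  | 4 => ∑ i ∈ Icc 1 m, b i = 1
  | 5 => ∑ i ∈ Icc 1 m, b i * c i = 1 / 2
  | 6 => ∑ i ∈ Icc 1 m, b i * c i ^ 2 = 1 / 3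
  | 7 => ∑ i ∈ Icc 1 m, ∑ j ∈ Icc 1 m, b i * a i j * c j = 1 / 6
  | 8 => ∑ i ∈ Icc 1 m, b i * c i ^ 3 = 1 / 4
  | 9 => ∑ i ∈ Icc 1 m, ∑ j ∈ Icc 1 m, b i * c i * a i j * c j = 1 / 8
  | 10 => ∑ i ∈ Icc 1 m, ∑ j ∈ Icc 1 m, b i * a i j * c j ^ 2 = 1 / 12
  | 11 => ∑ i ∈ Icc 1 m, ∑ j ∈ Icc 1 m, ∑ k ∈ Icc 1 m,
      b i * a i j * a j k * c k = 1 / 24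
  | 12 => ∑ i ∈ Icc 1 m, b i * c i ^ 4 = 1 / 5
  | 13 => ∑ i ∈ Icc 1 m, ∑ j ∈ Icc 1 m, b i * c i ^ 2 * a i j * c j = 1 / 10
  | 14 => ∑ i ∈ Icc 1 m, ∑ j ∈ Icc 1 m, b i * c i * a i j * c j ^ 2 = 1 / 15
  | 15 => ∑ i ∈ Icc 1 m, ∑ j ∈ Icc 1 m, ∑ k ∈ Icc 1 m,
      b i * c i * a i j * a j k * c k = 1 / 30
  | 16 => ∑ i ∈ Icc 1 m, b i * (∑ j ∈ Icc 1 m, a i j * c j) ^ 2 = 1 / 20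
  | 17 => ∑ i ∈ Icc 1 m, ∑ j ∈ Icc 1 m, b i * a i j * c j ^ 3 = 1 / 20
  | 18 => ∑ i ∈ Icc 1 m, ∑ j ∈ Icc 1 m, ∑ k ∈ Icc 1 m,
      b i * a i j * c j * a j k * c k = 1 / 40
  | 19 => ∑ i ∈ Icc 1 m, ∑ j ∈ Icc 1 m, ∑ k ∈ Icc 1 m,
      b i * a i j * a j k * c k ^ 2 = 1 / 60
  | 20 => ∑ i ∈ Icc 1 m, ∑ j ∈ Icc 1 m, ∑ k ∈ Icc 1 m, ∑ l ∈ Icc 1 m,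
      b i * a i j * a j k * a k l * c l = 1 / 120
  | _ => True

/-- `T_r`: the set of ULN-trees (equivalence classes) of order at most `r`. -/
def ULNTr (r : ℕ) : Set (Set LNTree) :=
  { S | ∃ t : LNTree, t.order ≤ r ∧ S = eqClass t }

/-- `T_{r−} := { Υ ∈ T_r : ⟦[ ]_0⟧ is not a branch of Υ }`. -/
def ULNTrMinus (r : ℕ) : Set (Set LNTree) :=
  { S | S ∈ ULNTr r ∧ ¬ ULNBranch (eqClass (LNTree.node 0 [])) S }

/-- The number of the last Table 1 condition required for order `r`:
conditions (1)–(4) for `r = 1`, (1)–(5) for `r = 2`, (1)–(7) for `r = 3`,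
(1)–(11) for `r = 4`, (1)–(20) for `r = 5`. -/
def numCond : ℕ → ℕ
  | 1 => 4
  | 2 => 5
  | 3 => 7
  | 4 => 11
  | 5 => 20
  | _ => 0

open Finset

lemma attach_map_prod (l : List LNTree) (f : LNTree → ℝ) :
    (l.attach.map (fun y => f y.1)).prod = (l.map f).prod := by
  simp [List.attach_map_val]

lemma order_node (k : ℕ) (ys : List LNTree) :
    (LNTree.node k ys).order = 1 + k + (ys.map LNTree.order).sum := by
  rw [LNTree.order]; simp [List.attach_map_val]

lemma order_pos (t : LNTree) : 1 ≤ t.order := by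
  cases t with | node k ys => rw [order_node]; omega

lemma elemCoeff_nil_zero (m : ℕ) (a : ℕ → ℕ → ℝ) (b c : ℕ → ℝ) (k : ℕ) :
    elemCoeff m a b c 0 (LNTree.node k []) =
      (∑ j ∈ Icc 1 m, b j * (c 0 - c j) ^ k) - 1 / ((k : ℝ) + 1) := by
  rw [elemCoeff]; simp

lemma elemCoeff_nil (m : ℕ) (a : ℕ → ℕ → ℝ) (b c : ℕ → ℝ) {i : ℕ} (hi : i ≠ 0) (k : ℕ) :
    elemCoeff m a b c i (LNTree.node k []) =
      (∑ j ∈ Icc 1 m, a i j * (c i - c j) ^ k) - (c i) ^ (k + 1) / ((k : ℝ) + 1) := by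
  rw [elemCoeff]; simp [hi]

lemma elemCoeff_cons_zero (m : ℕ) (a : ℕ → ℕ → ℝ) (b c : ℕ → ℝ) (k : ℕ)
    (y : LNTree) (ys : List LNTree) :
    elemCoeff m a b c 0 (LNTree.node k (y :: ys)) =
      ∑ j ∈ Icc 1 m, b j * (c 0 - c j) ^ k *
        ((y :: ys).map (elemCoeff m a b c j)).prod := by
  rw [elemCoeff]; simp [List.attach_map_val]

lemma elemCoeff_cons (m : ℕ) (a : ℕ → ℕ → ℝ) (b c : ℕ → ℝ) {i : ℕ} (hi : i ≠ 0) (k : ℕ)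
    (y : LNTree) (ys : List LNTree) :
    elemCoeff m a b c i (LNTree.node k (y :: ys)) =
      ∑ j ∈ Icc 1 m, a i j * (c i - c j) ^ k *
        ((y :: ys).map (elemCoeff m a b c j)).prod := by
  rw [elemCoeff]; simp [hi, List.attach_map_val]

lemma list_sum_fin (l : List LNTree) (f : LNTree → ℕ) :
    (l.map f).sum = ∑ i : Fin l.length, f (l.get i) := by
  induction l with
  | nil => simp
  | cons x xs ih =>
    rw [List.map_cons, List.sum_cons, ih]
    show _ = ∑ i : Fin (xs.length + 1), f ((x :: xs).get i)
    rw [Fin.sum_univ_succ]; rfl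

lemma list_prod_fin (l : List LNTree) (f : LNTree → ℝ) :
    (l.map f).prod = ∏ i : Fin l.length, f (l.get i) := by
  induction l with
  | nil => simp
  | cons x xs ih =>
    rw [List.map_cons, List.prod_cons, ih]
    show _ = ∏ i : Fin (xs.length + 1), f ((x :: xs).get i)
    rw [Fin.prod_univ_succ]; rfl

lemma lnequiv_refl : ∀ t : LNTree, LNEquiv t t
  | .node k ys => .node k ys ys (Equiv.refl _) (fun i => lnequiv_refl (ys.get i))
decreasing_by
  simp only [LNTree.node.sizeOf_spec]
  have h1 : ys.get i ∈ ys := by have := ys.get_mem i; simpa using this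
  have := List.sizeOf_lt_of_mem h1
  omega

lemma lnequiv_symm {s t : LNTree} (h : LNEquiv s t) : LNEquiv t s := by
  induction h with
  | node k ys zs σ h ih =>
    refine .node k zs ys σ.symm (fun i => ?_)
    have := ih (σ.symm i)
    simpa using this

lemma lnequiv_trans {t1 t2 : LNTree} (h12 : LNEquiv t1 t2) :
    ∀ {t3 : LNTree}, LNEquiv t2 t3 → LNEquiv t1 t3 := by
  induction h12 with
  | node k ys zs σ h ih =>
    intro t3 h23
    cases h23 with
    | node _ _ ws σ' h' =>
      refine .node k ys ws (σ'.trans σ) (fun i => ?_)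
      exact ih (σ' i) (h' i)

lemma lnequiv_order {s t : LNTree} (h : LNEquiv s t) : s.order = t.order := by
  induction h with
  | node k ys zs σ h ih =>
    rw [order_node, order_node]
    congr 1
    rw [list_sum_fin, list_sum_fin]
    rw [← Equiv.sum_comp σ (fun i => (ys.get i).order)]
    exact Finset.sum_congr rfl fun i _ => ih i

lemma lnequiv_elemCoeff (m : ℕ) (a : ℕ → ℕ → ℝ) (b c : ℕ → ℝ) {s t : LNTree}
    (h : LNEquiv s t) : ∀ i, elemCoeff m a b c i s = elemCoeff m a b c i t := by
  induction h with
  | node k ys zs σ h ih =>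
    intro i
    have hprod : ∀ j, (ys.map (elemCoeff m a b c j)).prod
        = (zs.map (elemCoeff m a b c j)).prod := by
      intro j
      rw [list_prod_fin, list_prod_fin]
      rw [← Equiv.prod_comp σ (fun i => elemCoeff m a b c j (ys.get i))]
      exact Finset.prod_congr rfl fun i _ => ih i j
    cases ys with
    | nil =>
      cases zs with
      | nil => rfl
      | cons z zs' => exact absurd (σ ⟨0, by simp⟩).isLt (by simp)
    | cons y ys' =>
      cases zs with
      | nil => exact absurd (σ.symm ⟨0, by simp⟩).isLt (by simp)
      | cons z zs' =>
        rcases Nat.eq_zero_or_pos i with rfl | hi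
        · rw [elemCoeff_cons_zero, elemCoeff_cons_zero]
          exact Finset.sum_congr rfl fun j _ => by rw [hprod j]
        · rw [elemCoeff_cons m a b c (by omega), elemCoeff_cons m a b c (by omega)]
          exact Finset.sum_congr rfl fun j _ => by rw [hprod j]

lemma eqClass_eq_of_equiv {s t : LNTree} (h : LNEquiv s t) : eqClass s = eqClass t :=
  Set.ext fun u => ⟨fun hu => lnequiv_trans hu h, fun hu => lnequiv_trans hu (lnequiv_symm h)⟩

lemma branch_of_mem {y : LNTree} {k : ℕ} {ys : List LNTree}
    (hy : y ∈ ys) (hb : ¬ IsBranch (LNTree.node 0 []) (LNTree.node k ys)) :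
    y ≠ LNTree.node 0 [] ∧ ¬ IsBranch (LNTree.node 0 []) y := by
  constructor
  · rintro rfl; exact hb (IsBranch.mem hy)
  · intro hby; exact hb (IsBranch.trans hy hby)

def tN (k : ℕ) : LNTree := LNTree.node k []
def tU1 : LNTree := LNTree.node 0 [tN 1]
def tU2 : LNTree := LNTree.node 0 [tN 2]
def tU3 : LNTree := LNTree.node 1 [tN 1]
def tU4 : LNTree := LNTree.node 0 [tU1]
def tV1 : LNTree := LNTree.node 0 [tN 3]
def tV2 : LNTree := LNTree.node 0 [tU2]
def tV3 : LNTree := LNTree.node 0 [tU3]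
def tV4 : LNTree := LNTree.node 0 [tU4]
def tV5 : LNTree := LNTree.node 1 [tN 2]
def tV6 : LNTree := LNTree.node 1 [tU1]
def tV7 : LNTree := LNTree.node 2 [tN 1]
def tV8 : LNTree := LNTree.node 0 [tN 1, tN 1]

lemma good_two_le {t : LNTree} (h1 : t ≠ LNTree.node 0 []) : 2 ≤ t.order := by
  cases t with
  | node k ys =>
    cases ys with
    | nil =>
      rw [order_node]
      have : k ≠ 0 := by rintro rfl; exact h1 rfl
      simp; omega
    | cons y ys' =>
      rw [order_node]
      have := order_pos y
      simp [List.sum_cons]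
      omega

lemma cls2 {t : LNTree} (h1 : t ≠ LNTree.node 0 [])
    (hb : ¬ IsBranch (LNTree.node 0 []) t) (ho : t.order ≤ 2) : t = tN 1 := by
  cases t with
  | node k ys =>
    rw [order_node] at ho
    cases ys with
    | nil =>
      have : k ≠ 0 := by rintro rfl; exact h1 rfl
      simp at ho
      have : k = 1 := by omega
      subst this; rfl
    | cons y ys' =>
      obtain ⟨hy1, _⟩ := branch_of_mem (List.mem_cons_self : y ∈ y :: ys') hb
      have := good_two_le hy1
      simp [List.sum_cons] at ho
      omega

lemma cls3 {t : LNTree} (h1 : t ≠ LNTree.node 0 [])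
    (hb : ¬ IsBranch (LNTree.node 0 []) t) (ho : t.order ≤ 3) :
    t = tN 1 ∨ t = tN 2 ∨ t = tU1 := by
  cases t with
  | node k ys =>
    rw [order_node] at ho
    cases ys with
    | nil =>
      have hk0 : k ≠ 0 := by rintro rfl; exact h1 rfl
      simp at ho
      have : k = 1 ∨ k = 2 := by omega
      rcases this with rfl | rfl <;> tauto
    | cons y ys' =>
      obtain ⟨hy1, hyb⟩ := branch_of_mem (List.mem_cons_self : y ∈ y :: ys') hb
      have h2y := good_two_le hy1
      cases ys' with
      | cons z zs =>
        obtain ⟨hz1, _⟩ := branch_of_mem (by simp : z ∈ y :: z :: zs) hb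
        have := good_two_le hz1
        simp [List.sum_cons] at ho
        omega
      | nil =>
        simp [List.sum_cons] at ho
        have hk : k = 0 := by omega
        have hoy : y.order ≤ 2 := by omega
        rcases cls2 hy1 hyb hoy with rfl
        subst hk
        tauto

lemma cls4 {t : LNTree} (h1 : t ≠ LNTree.node 0 [])
    (hb : ¬ IsBranch (LNTree.node 0 []) t) (ho : t.order ≤ 4) :
    t = tN 1 ∨ t = tN 2 ∨ t = tN 3 ∨ t = tU1 ∨ t = tU2 ∨ t = tU3 ∨ t = tU4 := by
  cases t with
  | node k ys =>
    rw [order_node] at ho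
    cases ys with
    | nil =>
      have hk0 : k ≠ 0 := by rintro rfl; exact h1 rfl
      simp at ho
      have : k = 1 ∨ k = 2 ∨ k = 3 := by omega
      rcases this with rfl | rfl | rfl <;> tauto
    | cons y ys' =>
      obtain ⟨hy1, hyb⟩ := branch_of_mem (List.mem_cons_self : y ∈ y :: ys') hb
      have h2y := good_two_le hy1
      cases ys' with
      | cons z zs =>
        obtain ⟨hz1, _⟩ := branch_of_mem (by simp : z ∈ y :: z :: zs) hb
        have := good_two_le hz1
        simp [List.sum_cons] at ho
        omega
      | nil =>
        simp [List.sum_cons] at ho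
        have hk : k = 0 ∨ k = 1 := by omega
        rcases hk with rfl | rfl
        · have hoy : y.order ≤ 3 := by omega
          rcases cls3 hy1 hyb hoy with rfl | rfl | rfl <;> tauto
        · have hoy : y.order ≤ 2 := by omega
          rcases cls2 hy1 hyb hoy with rfl
          tauto

lemma cls5 {t : LNTree}
    (hb : ¬ IsBranch (LNTree.node 0 []) t) (ho : t.order ≤ 5) :
    t = tN 0 ∨ t = tN 1 ∨ t = tN 2 ∨ t = tN 3 ∨ t = tN 4 ∨
    t = tU1 ∨ t = tU2 ∨ t = tU3 ∨ t = tU4 ∨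
    t = tV1 ∨ t = tV2 ∨ t = tV3 ∨ t = tV4 ∨ t = tV5 ∨ t = tV6 ∨ t = tV7 ∨ t = tV8 := by
  cases t with
  | node k ys =>
    rw [order_node] at ho
    cases ys with
    | nil =>
      simp at ho
      have : k = 0 ∨ k = 1 ∨ k = 2 ∨ k = 3 ∨ k = 4 := by omega
      rcases this with rfl | rfl | rfl | rfl | rfl <;> tauto
    | cons y ys' =>
      obtain ⟨hy1, hyb⟩ := branch_of_mem (List.mem_cons_self : y ∈ y :: ys') hb
      have h2y := good_two_le hy1
      cases ys' with
      | cons z zs =>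
        obtain ⟨hz1, hzb⟩ := branch_of_mem (by simp : z ∈ y :: z :: zs) hb
        have h2z := good_two_le hz1
        cases zs with
        | cons w ws =>
          obtain ⟨hw1, _⟩ := branch_of_mem (by simp : w ∈ y :: z :: w :: ws) hb
          have := good_two_le hw1
          simp [List.sum_cons] at ho
          omega
        | nil =>
          simp [List.sum_cons] at ho
          have hk : k = 0 := by omega
          have hy2 : y.order ≤ 2 := by omega
          have hz2 : z.order ≤ 2 := by omega
          rcases cls2 hy1 hyb hy2 with rfl
          rcases cls2 hz1 hzb hz2 with rfl
          subst hk
          tauto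
      | nil =>
        simp [List.sum_cons] at ho
        have hk : k = 0 ∨ k = 1 ∨ k = 2 := by omega
        rcases hk with rfl | rfl | rfl
        · have hoy : y.order ≤ 4 := by omega
          rcases cls4 hy1 hyb hoy with rfl | rfl | rfl | rfl | rfl | rfl | rfl <;> tauto
        · have hoy : y.order ≤ 3 := by omega
          rcases cls3 hy1 hyb hoy with rfl | rfl | rfl <;> tauto
        · have hoy : y.order ≤ 2 := by omega
          rcases cls2 hy1 hyb hoy with rfl
          tauto

section Eval

variable (m : ℕ) (a : ℕ → ℕ → ℝ) (b c : ℕ → ℝ)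

lemma L1 (h3 : ∀ i ∈ Icc 1 m, c i = ∑ j ∈ Icc 1 m, a i j) :
    ∀ j ∈ Icc 1 m, elemCoeff m a b c j (tN 1) =
      c j ^ 2 / 2 - ∑ l ∈ Icc 1 m, a j l * c l := by
  intro j hj
  have hj0 : j ≠ 0 := by simp [mem_Icc] at hj; omega
  rw [tN, elemCoeff_nil m a b c hj0]
  have e : ∑ l ∈ Icc 1 m, a j l * (c j - c l) ^ 1
      = c j * (∑ l ∈ Icc 1 m, a j l) - ∑ l ∈ Icc 1 m, a j l * c l := by
    simp only [Finset.mul_sum]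
    simp only [← Finset.sum_sub_distrib]
    exact Finset.sum_congr rfl fun l _ => by ring
  rw [e, ← h3 j hj]
  push_cast
  ring

lemma L2 (h3 : ∀ i ∈ Icc 1 m, c i = ∑ j ∈ Icc 1 m, a i j) :
    ∀ j ∈ Icc 1 m, elemCoeff m a b c j (tN 2) =
      c j ^ 3 * (2/3) - 2 * (c j * ∑ l ∈ Icc 1 m, a j l * c l)
        + ∑ l ∈ Icc 1 m, a j l * c l ^ 2 := by
  intro j hj
  have hj0 : j ≠ 0 := by simp [mem_Icc] at hj; omega
  rw [tN, elemCoeff_nil m a b c hj0]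
  have e : ∑ l ∈ Icc 1 m, a j l * (c j - c l) ^ 2
      = c j ^ 2 * (∑ l ∈ Icc 1 m, a j l) - 2 * (c j * ∑ l ∈ Icc 1 m, a j l * c l)
        + ∑ l ∈ Icc 1 m, a j l * c l ^ 2 := by
    simp only [Finset.mul_sum]
    simp only [← Finset.sum_sub_distrib, ← Finset.sum_add_distrib]
    exact Finset.sum_congr rfl fun l _ => by ring
  rw [e, ← h3 j hj]
  push_cast
  ring

lemma L3 (h3 : ∀ i ∈ Icc 1 m, c i = ∑ j ∈ Icc 1 m, a i j) :
    ∀ j ∈ Icc 1 m, elemCoeff m a b c j (tN 3) =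
      c j ^ 4 * (3/4) - 3 * (c j ^ 2 * ∑ l ∈ Icc 1 m, a j l * c l)
        + 3 * (c j * ∑ l ∈ Icc 1 m, a j l * c l ^ 2)
        - ∑ l ∈ Icc 1 m, a j l * c l ^ 3 := by
  intro j hj
  have hj0 : j ≠ 0 := by simp [mem_Icc] at hj; omega
  rw [tN, elemCoeff_nil m a b c hj0]
  have e : ∑ l ∈ Icc 1 m, a j l * (c j - c l) ^ 3
      = c j ^ 3 * (∑ l ∈ Icc 1 m, a j l)
        - 3 * (c j ^ 2 * ∑ l ∈ Icc 1 m, a j l * c l)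
        + 3 * (c j * ∑ l ∈ Icc 1 m, a j l * c l ^ 2)
        - ∑ l ∈ Icc 1 m, a j l * c l ^ 3 := by
    simp only [Finset.mul_sum]
    simp only [← Finset.sum_sub_distrib, ← Finset.sum_add_distrib]
    exact Finset.sum_congr rfl fun l _ => by ring
  rw [e, ← h3 j hj]
  push_cast
  ring

lemma L4 (h3 : ∀ i ∈ Icc 1 m, c i = ∑ j ∈ Icc 1 m, a i j) :
    ∀ j ∈ Icc 1 m, elemCoeff m a b c j tU1 =
      ∑ l ∈ Icc 1 m, a j l * (c l ^ 2 / 2 - ∑ p ∈ Icc 1 m, a l p * c p) := by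
  intro j hj
  have hj0 : j ≠ 0 := by simp [mem_Icc] at hj; omega
  rw [tU1, elemCoeff_cons m a b c hj0]
  refine Finset.sum_congr rfl fun l hl => ?_
  rw [List.map_cons, List.map_nil, List.prod_cons, List.prod_nil, L1 m a b c h3 l hl]
  ring

lemma E_U1 (h3 : ∀ i ∈ Icc 1 m, c i = ∑ j ∈ Icc 1 m, a i j)
    (h6 : ∑ i ∈ Icc 1 m, b i * c i ^ 2 = 1 / 3)
    (h7 : ∑ i ∈ Icc 1 m, ∑ j ∈ Icc 1 m, b i * a i j * c j = 1 / 6) :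
    elemCoeff m a b c 0 tU1 = 0 := by
  calc elemCoeff m a b c 0 tU1
      = ∑ j ∈ Icc 1 m, b j * (c j ^ 2 / 2 - ∑ l ∈ Icc 1 m, a j l * c l) := by
        rw [tU1, elemCoeff_cons_zero]
        refine Finset.sum_congr rfl fun j hj => ?_
        rw [List.map_cons, List.map_nil, List.prod_cons, List.prod_nil,
          L1 m a b c h3 j hj]
        ring
    _ = (∑ j ∈ Icc 1 m, b j * c j ^ 2) / 2
        - ∑ j ∈ Icc 1 m, ∑ l ∈ Icc 1 m, b j * a j l * c l := by
        simp only [Finset.sum_div, Finset.mul_sum]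
        simp only [← Finset.sum_sub_distrib]
        refine Finset.sum_congr rfl fun j _ => ?_
        simp only [mul_assoc, ← Finset.mul_sum]
        ring
    _ = 0 := by rw [h6, h7]; norm_num

lemma L5 (h3 : ∀ i ∈ Icc 1 m, c i = ∑ j ∈ Icc 1 m, a i j) :
    ∀ j ∈ Icc 1 m, elemCoeff m a b c j tU3 =
      ∑ l ∈ Icc 1 m, a j l * (c j - c l) *
        (c l ^ 2 / 2 - ∑ p ∈ Icc 1 m, a l p * c p) := by
  intro j hj
  have hj0 : j ≠ 0 := by simp [mem_Icc] at hj; omega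
  rw [tU3, elemCoeff_cons m a b c hj0]
  refine Finset.sum_congr rfl fun l hl => ?_
  rw [List.map_cons, List.map_nil, List.prod_cons, List.prod_nil, L1 m a b c h3 l hl]
  ring

lemma L6 (h3 : ∀ i ∈ Icc 1 m, c i = ∑ j ∈ Icc 1 m, a i j) :
    ∀ j ∈ Icc 1 m, elemCoeff m a b c j tU2 =
      ∑ l ∈ Icc 1 m, a j l * (c l ^ 3 * (2/3) - 2 * (c l * ∑ p ∈ Icc 1 m, a l p * c p)
        + ∑ p ∈ Icc 1 m, a l p * c p ^ 2) := by
  intro j hj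
  have hj0 : j ≠ 0 := by simp [mem_Icc] at hj; omega
  rw [tU2, elemCoeff_cons m a b c hj0]
  refine Finset.sum_congr rfl fun l hl => ?_
  rw [List.map_cons, List.map_nil, List.prod_cons, List.prod_nil, L2 m a b c h3 l hl]
  ring

lemma L7 (h3 : ∀ i ∈ Icc 1 m, c i = ∑ j ∈ Icc 1 m, a i j) :
    ∀ j ∈ Icc 1 m, elemCoeff m a b c j tU4 =
      ∑ l ∈ Icc 1 m, a j l * (∑ p ∈ Icc 1 m, a l p *
        (c p ^ 2 / 2 - ∑ q ∈ Icc 1 m, a p q * c q)) := by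
  intro j hj
  have hj0 : j ≠ 0 := by simp [mem_Icc] at hj; omega
  rw [tU4, elemCoeff_cons m a b c hj0]
  refine Finset.sum_congr rfl fun l hl => ?_
  rw [List.map_cons, List.map_nil, List.prod_cons, List.prod_nil, L4 m a b c h3 l hl]
  ring

lemma E_N0 (h4 : ∑ i ∈ Icc 1 m, b i = 1) :
    elemCoeff m a b c 0 (tN 0) = 0 := by
  rw [tN, elemCoeff_nil_zero]
  simp [h4]

lemma E_N1 (hc0 : c 0 = 1) (h4 : ∑ i ∈ Icc 1 m, b i = 1)
    (h5 : ∑ i ∈ Icc 1 m, b i * c i = 1 / 2) :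
    elemCoeff m a b c 0 (tN 1) = 0 := by
  rw [tN, elemCoeff_nil_zero, hc0]
  have e : ∑ j ∈ Icc 1 m, b j * (1 - c j) ^ 1
      = (∑ j ∈ Icc 1 m, b j) - ∑ j ∈ Icc 1 m, b j * c j := by
    simp only [← Finset.sum_sub_distrib]
    exact Finset.sum_congr rfl fun l _ => by ring
  rw [e, h4, h5]
  norm_num

lemma E_N2 (hc0 : c 0 = 1) (h4 : ∑ i ∈ Icc 1 m, b i = 1)
    (h5 : ∑ i ∈ Icc 1 m, b i * c i = 1 / 2)
    (h6 : ∑ i ∈ Icc 1 m, b i * c i ^ 2 = 1 / 3) :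
    elemCoeff m a b c 0 (tN 2) = 0 := by
  rw [tN, elemCoeff_nil_zero, hc0]
  have e : ∑ j ∈ Icc 1 m, b j * (1 - c j) ^ 2
      = (∑ j ∈ Icc 1 m, b j) - 2 * ∑ j ∈ Icc 1 m, b j * c j
        + ∑ j ∈ Icc 1 m, b j * c j ^ 2 := by
    simp only [Finset.mul_sum]
    simp only [← Finset.sum_sub_distrib, ← Finset.sum_add_distrib]
    exact Finset.sum_congr rfl fun l _ => by ring
  rw [e, h4, h5, h6]
  norm_num

lemma E_N3 (hc0 : c 0 = 1) (h4 : ∑ i ∈ Icc 1 m, b i = 1)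
    (h5 : ∑ i ∈ Icc 1 m, b i * c i = 1 / 2)
    (h6 : ∑ i ∈ Icc 1 m, b i * c i ^ 2 = 1 / 3)
    (h8 : ∑ i ∈ Icc 1 m, b i * c i ^ 3 = 1 / 4) :
    elemCoeff m a b c 0 (tN 3) = 0 := by
  rw [tN, elemCoeff_nil_zero, hc0]
  have e : ∑ j ∈ Icc 1 m, b j * (1 - c j) ^ 3
      = (∑ j ∈ Icc 1 m, b j) - 3 * ∑ j ∈ Icc 1 m, b j * c j
        + 3 * ∑ j ∈ Icc 1 m, b j * c j ^ 2 - ∑ j ∈ Icc 1 m, b j * c j ^ 3 := by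
    simp only [Finset.mul_sum]
    simp only [← Finset.sum_sub_distrib, ← Finset.sum_add_distrib]
    exact Finset.sum_congr rfl fun l _ => by ring
  rw [e, h4, h5, h6, h8]
  norm_num

lemma E_N4 (hc0 : c 0 = 1) (h4 : ∑ i ∈ Icc 1 m, b i = 1)
    (h5 : ∑ i ∈ Icc 1 m, b i * c i = 1 / 2)
    (h6 : ∑ i ∈ Icc 1 m, b i * c i ^ 2 = 1 / 3)
    (h8 : ∑ i ∈ Icc 1 m, b i * c i ^ 3 = 1 / 4)
    (h12 : ∑ i ∈ Icc 1 m, b i * c i ^ 4 = 1 / 5) :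
    elemCoeff m a b c 0 (tN 4) = 0 := by
  rw [tN, elemCoeff_nil_zero, hc0]
  have e : ∑ j ∈ Icc 1 m, b j * (1 - c j) ^ 4
      = (∑ j ∈ Icc 1 m, b j) - 4 * ∑ j ∈ Icc 1 m, b j * c j
        + 6 * ∑ j ∈ Icc 1 m, b j * c j ^ 2 - 4 * ∑ j ∈ Icc 1 m, b j * c j ^ 3
        + ∑ j ∈ Icc 1 m, b j * c j ^ 4 := by
    simp only [Finset.mul_sum]
    simp only [← Finset.sum_sub_distrib, ← Finset.sum_add_distrib]
    exact Finset.sum_congr rfl fun l _ => by ring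
  rw [e, h4, h5, h6, h8, h12]
  norm_num

lemma E_U2 (h3 : ∀ i ∈ Icc 1 m, c i = ∑ j ∈ Icc 1 m, a i j)
    (h8 : ∑ i ∈ Icc 1 m, b i * c i ^ 3 = 1 / 4)
    (h9 : ∑ i ∈ Icc 1 m, ∑ j ∈ Icc 1 m, b i * c i * a i j * c j = 1 / 8)
    (h10 : ∑ i ∈ Icc 1 m, ∑ j ∈ Icc 1 m, b i * a i j * c j ^ 2 = 1 / 12) :
    elemCoeff m a b c 0 tU2 = 0 := by
  calc elemCoeff m a b c 0 tU2
      = ∑ j ∈ Icc 1 m, b j * (c j ^ 3 * (2/3) - 2 * (c j * ∑ l ∈ Icc 1 m, a j l * c l)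
          + ∑ l ∈ Icc 1 m, a j l * c l ^ 2) := by
        rw [tU2, elemCoeff_cons_zero]
        refine Finset.sum_congr rfl fun j hj => ?_
        rw [List.map_cons, List.map_nil, List.prod_cons, List.prod_nil,
          L2 m a b c h3 j hj]
        ring
    _ = (2/3) * (∑ j ∈ Icc 1 m, b j * c j ^ 3)
        - 2 * ∑ j ∈ Icc 1 m, ∑ l ∈ Icc 1 m, b j * c j * a j l * c l
        + ∑ j ∈ Icc 1 m, ∑ l ∈ Icc 1 m, b j * a j l * c l ^ 2 := by
        simp only [Finset.sum_div, Finset.mul_sum]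
        simp only [← Finset.sum_sub_distrib, ← Finset.sum_add_distrib]
        refine Finset.sum_congr rfl fun j _ => ?_
        simp only [mul_assoc, ← Finset.mul_sum]
        ring
    _ = 0 := by rw [h8, h9, h10]; norm_num

lemma E_U3 (hc0 : c 0 = 1) (h3 : ∀ i ∈ Icc 1 m, c i = ∑ j ∈ Icc 1 m, a i j)
    (h6 : ∑ i ∈ Icc 1 m, b i * c i ^ 2 = 1 / 3)
    (h7 : ∑ i ∈ Icc 1 m, ∑ j ∈ Icc 1 m, b i * a i j * c j = 1 / 6)
    (h8 : ∑ i ∈ Icc 1 m, b i * c i ^ 3 = 1 / 4)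
    (h9 : ∑ i ∈ Icc 1 m, ∑ j ∈ Icc 1 m, b i * c i * a i j * c j = 1 / 8) :
    elemCoeff m a b c 0 tU3 = 0 := by
  calc elemCoeff m a b c 0 tU3
      = ∑ j ∈ Icc 1 m, b j * (1 - c j) * (c j ^ 2 / 2 - ∑ l ∈ Icc 1 m, a j l * c l) := by
        rw [tU3, elemCoeff_cons_zero]
        refine Finset.sum_congr rfl fun j hj => ?_
        rw [List.map_cons, List.map_nil, List.prod_cons, List.prod_nil,
          L1 m a b c h3 j hj, hc0]
        ring
    _ = (∑ j ∈ Icc 1 m, b j * c j ^ 2) / 2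
        - ∑ j ∈ Icc 1 m, ∑ l ∈ Icc 1 m, b j * a j l * c l
        - (∑ j ∈ Icc 1 m, b j * c j ^ 3) / 2
        + ∑ j ∈ Icc 1 m, ∑ l ∈ Icc 1 m, b j * c j * a j l * c l := by
        simp only [Finset.sum_div, Finset.mul_sum]
        simp only [← Finset.sum_sub_distrib, ← Finset.sum_add_distrib]
        refine Finset.sum_congr rfl fun j _ => ?_
        simp only [mul_assoc, ← Finset.mul_sum]
        ring
    _ = 0 := by rw [h6, h7, h8, h9]; norm_num

lemma E_U4 (h3 : ∀ i ∈ Icc 1 m, c i = ∑ j ∈ Icc 1 m, a i j)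
    (h10 : ∑ i ∈ Icc 1 m, ∑ j ∈ Icc 1 m, b i * a i j * c j ^ 2 = 1 / 12)
    (h11 : ∑ i ∈ Icc 1 m, ∑ j ∈ Icc 1 m, ∑ k ∈ Icc 1 m,
      b i * a i j * a j k * c k = 1 / 24) :
    elemCoeff m a b c 0 tU4 = 0 := by
  calc elemCoeff m a b c 0 tU4
      = ∑ j ∈ Icc 1 m, b j * ∑ l ∈ Icc 1 m, a j l *
          (c l ^ 2 / 2 - ∑ p ∈ Icc 1 m, a l p * c p) := by
        rw [tU4, elemCoeff_cons_zero]
        refine Finset.sum_congr rfl fun j hj => ?_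
        rw [List.map_cons, List.map_nil, List.prod_cons, List.prod_nil,
          L4 m a b c h3 j hj]
        ring
    _ = (∑ j ∈ Icc 1 m, ∑ l ∈ Icc 1 m, b j * a j l * c l ^ 2) / 2
        - ∑ j ∈ Icc 1 m, ∑ l ∈ Icc 1 m, ∑ p ∈ Icc 1 m, b j * a j l * a l p * c p := by
        simp only [Finset.sum_div, Finset.mul_sum]
        simp only [← Finset.sum_sub_distrib]
        refine Finset.sum_congr rfl fun j _ => ?_
        refine Finset.sum_congr rfl fun l _ => ?_
        simp only [mul_assoc, ← Finset.mul_sum]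
        ring
    _ = 0 := by rw [h10, h11]; norm_num

lemma E_V1 (h3 : ∀ i ∈ Icc 1 m, c i = ∑ j ∈ Icc 1 m, a i j)
    (h12 : ∑ i ∈ Icc 1 m, b i * c i ^ 4 = 1 / 5)
    (h13 : ∑ i ∈ Icc 1 m, ∑ j ∈ Icc 1 m, b i * c i ^ 2 * a i j * c j = 1 / 10)
    (h14 : ∑ i ∈ Icc 1 m, ∑ j ∈ Icc 1 m, b i * c i * a i j * c j ^ 2 = 1 / 15)
    (h17 : ∑ i ∈ Icc 1 m, ∑ j ∈ Icc 1 m, b i * a i j * c j ^ 3 = 1 / 20) :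
    elemCoeff m a b c 0 tV1 = 0 := by
  calc elemCoeff m a b c 0 tV1
      = ∑ j ∈ Icc 1 m, b j * (c j ^ 4 * (3/4)
          - 3 * (c j ^ 2 * ∑ l ∈ Icc 1 m, a j l * c l)
          + 3 * (c j * ∑ l ∈ Icc 1 m, a j l * c l ^ 2)
          - ∑ l ∈ Icc 1 m, a j l * c l ^ 3) := by
        rw [tV1, elemCoeff_cons_zero]
        refine Finset.sum_congr rfl fun j hj => ?_
        rw [List.map_cons, List.map_nil, List.prod_cons, List.prod_nil,
          L3 m a b c h3 j hj]
        ring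
    _ = (3/4) * (∑ j ∈ Icc 1 m, b j * c j ^ 4)
        - 3 * ∑ j ∈ Icc 1 m, ∑ l ∈ Icc 1 m, b j * c j ^ 2 * a j l * c l
        + 3 * ∑ j ∈ Icc 1 m, ∑ l ∈ Icc 1 m, b j * c j * a j l * c l ^ 2
        - ∑ j ∈ Icc 1 m, ∑ l ∈ Icc 1 m, b j * a j l * c l ^ 3 := by
        simp only [Finset.sum_div, Finset.mul_sum]
        simp only [← Finset.sum_sub_distrib, ← Finset.sum_add_distrib]
        refine Finset.sum_congr rfl fun j _ => ?_
        simp only [mul_assoc, ← Finset.mul_sum]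
        ring
    _ = 0 := by rw [h12, h13, h14, h17]; norm_num

lemma E_V2 (h3 : ∀ i ∈ Icc 1 m, c i = ∑ j ∈ Icc 1 m, a i j)
    (h17 : ∑ i ∈ Icc 1 m, ∑ j ∈ Icc 1 m, b i * a i j * c j ^ 3 = 1 / 20)
    (h18 : ∑ i ∈ Icc 1 m, ∑ j ∈ Icc 1 m, ∑ k ∈ Icc 1 m,
      b i * a i j * c j * a j k * c k = 1 / 40)
    (h19 : ∑ i ∈ Icc 1 m, ∑ j ∈ Icc 1 m, ∑ k ∈ Icc 1 m,
      b i * a i j * a j k * c k ^ 2 = 1 / 60) :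
    elemCoeff m a b c 0 tV2 = 0 := by
  calc elemCoeff m a b c 0 tV2
      = ∑ j ∈ Icc 1 m, b j * ∑ l ∈ Icc 1 m, a j l *
          (c l ^ 3 * (2/3) - 2 * (c l * ∑ p ∈ Icc 1 m, a l p * c p)
            + ∑ p ∈ Icc 1 m, a l p * c p ^ 2) := by
        rw [tV2, elemCoeff_cons_zero]
        refine Finset.sum_congr rfl fun j hj => ?_
        rw [List.map_cons, List.map_nil, List.prod_cons, List.prod_nil,
          L6 m a b c h3 j hj]
        ring
    _ = (2/3) * (∑ j ∈ Icc 1 m, ∑ l ∈ Icc 1 m, b j * a j l * c l ^ 3)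
        - 2 * ∑ j ∈ Icc 1 m, ∑ l ∈ Icc 1 m, ∑ p ∈ Icc 1 m,
            b j * a j l * c l * a l p * c p
        + ∑ j ∈ Icc 1 m, ∑ l ∈ Icc 1 m, ∑ p ∈ Icc 1 m,
            b j * a j l * a l p * c p ^ 2 := by
        simp only [Finset.sum_div, Finset.mul_sum]
        simp only [← Finset.sum_sub_distrib, ← Finset.sum_add_distrib]
        refine Finset.sum_congr rfl fun j _ => ?_
        refine Finset.sum_congr rfl fun l _ => ?_
        simp only [mul_assoc, ← Finset.mul_sum]
        ring
    _ = 0 := by rw [h17, h18, h19]; norm_num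

lemma E_V3 (h3 : ∀ i ∈ Icc 1 m, c i = ∑ j ∈ Icc 1 m, a i j)
    (h14 : ∑ i ∈ Icc 1 m, ∑ j ∈ Icc 1 m, b i * c i * a i j * c j ^ 2 = 1 / 15)
    (h15 : ∑ i ∈ Icc 1 m, ∑ j ∈ Icc 1 m, ∑ k ∈ Icc 1 m,
      b i * c i * a i j * a j k * c k = 1 / 30)
    (h17 : ∑ i ∈ Icc 1 m, ∑ j ∈ Icc 1 m, b i * a i j * c j ^ 3 = 1 / 20)
    (h18 : ∑ i ∈ Icc 1 m, ∑ j ∈ Icc 1 m, ∑ k ∈ Icc 1 m,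
      b i * a i j * c j * a j k * c k = 1 / 40) :
    elemCoeff m a b c 0 tV3 = 0 := by
  calc elemCoeff m a b c 0 tV3
      = ∑ j ∈ Icc 1 m, b j * ∑ l ∈ Icc 1 m, a j l * (c j - c l) *
          (c l ^ 2 / 2 - ∑ p ∈ Icc 1 m, a l p * c p) := by
        rw [tV3, elemCoeff_cons_zero]
        refine Finset.sum_congr rfl fun j hj => ?_
        rw [List.map_cons, List.map_nil, List.prod_cons, List.prod_nil,
          L5 m a b c h3 j hj]
        ring
    _ = (∑ j ∈ Icc 1 m, ∑ l ∈ Icc 1 m, b j * c j * a j l * c l ^ 2) / 2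
        - ∑ j ∈ Icc 1 m, ∑ l ∈ Icc 1 m, ∑ p ∈ Icc 1 m,
            b j * c j * a j l * a l p * c p
        - (∑ j ∈ Icc 1 m, ∑ l ∈ Icc 1 m, b j * a j l * c l ^ 3) / 2
        + ∑ j ∈ Icc 1 m, ∑ l ∈ Icc 1 m, ∑ p ∈ Icc 1 m,
            b j * a j l * c l * a l p * c p := by
        simp only [Finset.sum_div, Finset.mul_sum]
        simp only [← Finset.sum_sub_distrib, ← Finset.sum_add_distrib]
        refine Finset.sum_congr rfl fun j _ => ?_
        refine Finset.sum_congr rfl fun l _ => ?_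
        simp only [mul_assoc, ← Finset.mul_sum]
        ring
    _ = 0 := by rw [h14, h15, h17, h18]; norm_num

lemma E_V4 (h3 : ∀ i ∈ Icc 1 m, c i = ∑ j ∈ Icc 1 m, a i j)
    (h19 : ∑ i ∈ Icc 1 m, ∑ j ∈ Icc 1 m, ∑ k ∈ Icc 1 m,
      b i * a i j * a j k * c k ^ 2 = 1 / 60)
    (h20 : ∑ i ∈ Icc 1 m, ∑ j ∈ Icc 1 m, ∑ k ∈ Icc 1 m, ∑ l ∈ Icc 1 m,
      b i * a i j * a j k * a k l * c l = 1 / 120) :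
    elemCoeff m a b c 0 tV4 = 0 := by
  calc elemCoeff m a b c 0 tV4
      = ∑ j ∈ Icc 1 m, b j * ∑ l ∈ Icc 1 m, a j l * (∑ p ∈ Icc 1 m, a l p *
          (c p ^ 2 / 2 - ∑ q ∈ Icc 1 m, a p q * c q)) := by
        rw [tV4, elemCoeff_cons_zero]
        refine Finset.sum_congr rfl fun j hj => ?_
        rw [List.map_cons, List.map_nil, List.prod_cons, List.prod_nil,
          L7 m a b c h3 j hj]
        ring
    _ = (∑ j ∈ Icc 1 m, ∑ l ∈ Icc 1 m, ∑ p ∈ Icc 1 m,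
            b j * a j l * a l p * c p ^ 2) / 2
        - ∑ j ∈ Icc 1 m, ∑ l ∈ Icc 1 m, ∑ p ∈ Icc 1 m, ∑ q ∈ Icc 1 m,
            b j * a j l * a l p * a p q * c q := by
        simp only [Finset.sum_div, Finset.mul_sum]
        simp only [← Finset.sum_sub_distrib]
        refine Finset.sum_congr rfl fun j _ => ?_
        refine Finset.sum_congr rfl fun l _ => ?_
        refine Finset.sum_congr rfl fun p _ => ?_
        simp only [mul_assoc, ← Finset.mul_sum]
        ring
    _ = 0 := by rw [h19, h20]; norm_num

lemma E_V5 (hc0 : c 0 = 1) (h3 : ∀ i ∈ Icc 1 m, c i = ∑ j ∈ Icc 1 m, a i j)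
    (h8 : ∑ i ∈ Icc 1 m, b i * c i ^ 3 = 1 / 4)
    (h9 : ∑ i ∈ Icc 1 m, ∑ j ∈ Icc 1 m, b i * c i * a i j * c j = 1 / 8)
    (h10 : ∑ i ∈ Icc 1 m, ∑ j ∈ Icc 1 m, b i * a i j * c j ^ 2 = 1 / 12)
    (h12 : ∑ i ∈ Icc 1 m, b i * c i ^ 4 = 1 / 5)
    (h13 : ∑ i ∈ Icc 1 m, ∑ j ∈ Icc 1 m, b i * c i ^ 2 * a i j * c j = 1 / 10)
    (h14 : ∑ i ∈ Icc 1 m, ∑ j ∈ Icc 1 m, b i * c i * a i j * c j ^ 2 = 1 / 15) :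
    elemCoeff m a b c 0 tV5 = 0 := by
  calc elemCoeff m a b c 0 tV5
      = ∑ j ∈ Icc 1 m, b j * (1 - c j) * (c j ^ 3 * (2/3)
          - 2 * (c j * ∑ l ∈ Icc 1 m, a j l * c l)
          + ∑ l ∈ Icc 1 m, a j l * c l ^ 2) := by
        rw [tV5, elemCoeff_cons_zero]
        refine Finset.sum_congr rfl fun j hj => ?_
        rw [List.map_cons, List.map_nil, List.prod_cons, List.prod_nil,
          L2 m a b c h3 j hj, hc0]
        ring
    _ = (2/3) * (∑ j ∈ Icc 1 m, b j * c j ^ 3)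
        - 2 * ∑ j ∈ Icc 1 m, ∑ l ∈ Icc 1 m, b j * c j * a j l * c l
        + ∑ j ∈ Icc 1 m, ∑ l ∈ Icc 1 m, b j * a j l * c l ^ 2
        - (2/3) * (∑ j ∈ Icc 1 m, b j * c j ^ 4)
        + 2 * ∑ j ∈ Icc 1 m, ∑ l ∈ Icc 1 m, b j * c j ^ 2 * a j l * c l
        - ∑ j ∈ Icc 1 m, ∑ l ∈ Icc 1 m, b j * c j * a j l * c l ^ 2 := by
        simp only [Finset.sum_div, Finset.mul_sum]
        simp only [← Finset.sum_sub_distrib, ← Finset.sum_add_distrib]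
        refine Finset.sum_congr rfl fun j _ => ?_
        simp only [mul_assoc, ← Finset.mul_sum]
        ring
    _ = 0 := by rw [h8, h9, h10, h12, h13, h14]; norm_num

lemma E_V6 (hc0 : c 0 = 1) (h3 : ∀ i ∈ Icc 1 m, c i = ∑ j ∈ Icc 1 m, a i j)
    (h10 : ∑ i ∈ Icc 1 m, ∑ j ∈ Icc 1 m, b i * a i j * c j ^ 2 = 1 / 12)
    (h11 : ∑ i ∈ Icc 1 m, ∑ j ∈ Icc 1 m, ∑ k ∈ Icc 1 m,
      b i * a i j * a j k * c k = 1 / 24)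
    (h14 : ∑ i ∈ Icc 1 m, ∑ j ∈ Icc 1 m, b i * c i * a i j * c j ^ 2 = 1 / 15)
    (h15 : ∑ i ∈ Icc 1 m, ∑ j ∈ Icc 1 m, ∑ k ∈ Icc 1 m,
      b i * c i * a i j * a j k * c k = 1 / 30) :
    elemCoeff m a b c 0 tV6 = 0 := by
  calc elemCoeff m a b c 0 tV6
      = ∑ j ∈ Icc 1 m, b j * (1 - c j) * ∑ l ∈ Icc 1 m, a j l *
          (c l ^ 2 / 2 - ∑ p ∈ Icc 1 m, a l p * c p) := by
        rw [tV6, elemCoeff_cons_zero]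
        refine Finset.sum_congr rfl fun j hj => ?_
        rw [List.map_cons, List.map_nil, List.prod_cons, List.prod_nil,
          L4 m a b c h3 j hj, hc0]
        ring
    _ = (∑ j ∈ Icc 1 m, ∑ l ∈ Icc 1 m, b j * a j l * c l ^ 2) / 2
        - ∑ j ∈ Icc 1 m, ∑ l ∈ Icc 1 m, ∑ p ∈ Icc 1 m, b j * a j l * a l p * c p
        - (∑ j ∈ Icc 1 m, ∑ l ∈ Icc 1 m, b j * c j * a j l * c l ^ 2) / 2
        + ∑ j ∈ Icc 1 m, ∑ l ∈ Icc 1 m, ∑ p ∈ Icc 1 m,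
            b j * c j * a j l * a l p * c p := by
        simp only [Finset.sum_div, Finset.mul_sum]
        simp only [← Finset.sum_sub_distrib, ← Finset.sum_add_distrib]
        refine Finset.sum_congr rfl fun j _ => ?_
        refine Finset.sum_congr rfl fun l _ => ?_
        simp only [mul_assoc, ← Finset.mul_sum]
        ring
    _ = 0 := by rw [h10, h11, h14, h15]; norm_num

lemma E_V7 (hc0 : c 0 = 1) (h3 : ∀ i ∈ Icc 1 m, c i = ∑ j ∈ Icc 1 m, a i j)
    (h6 : ∑ i ∈ Icc 1 m, b i * c i ^ 2 = 1 / 3)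
    (h7 : ∑ i ∈ Icc 1 m, ∑ j ∈ Icc 1 m, b i * a i j * c j = 1 / 6)
    (h8 : ∑ i ∈ Icc 1 m, b i * c i ^ 3 = 1 / 4)
    (h9 : ∑ i ∈ Icc 1 m, ∑ j ∈ Icc 1 m, b i * c i * a i j * c j = 1 / 8)
    (h12 : ∑ i ∈ Icc 1 m, b i * c i ^ 4 = 1 / 5)
    (h13 : ∑ i ∈ Icc 1 m, ∑ j ∈ Icc 1 m, b i * c i ^ 2 * a i j * c j = 1 / 10) :
    elemCoeff m a b c 0 tV7 = 0 := by
  calc elemCoeff m a b c 0 tV7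
      = ∑ j ∈ Icc 1 m, b j * (1 - c j) ^ 2 *
          (c j ^ 2 / 2 - ∑ l ∈ Icc 1 m, a j l * c l) := by
        rw [tV7, elemCoeff_cons_zero]
        refine Finset.sum_congr rfl fun j hj => ?_
        rw [List.map_cons, List.map_nil, List.prod_cons, List.prod_nil,
          L1 m a b c h3 j hj, hc0]
        ring
    _ = (∑ j ∈ Icc 1 m, b j * c j ^ 2) / 2
        - ∑ j ∈ Icc 1 m, ∑ l ∈ Icc 1 m, b j * a j l * c l
        - ∑ j ∈ Icc 1 m, b j * c j ^ 3
        + 2 * ∑ j ∈ Icc 1 m, ∑ l ∈ Icc 1 m, b j * c j * a j l * c l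
        + (∑ j ∈ Icc 1 m, b j * c j ^ 4) / 2
        - ∑ j ∈ Icc 1 m, ∑ l ∈ Icc 1 m, b j * c j ^ 2 * a j l * c l := by
        simp only [Finset.sum_div, Finset.mul_sum]
        simp only [← Finset.sum_sub_distrib, ← Finset.sum_add_distrib]
        refine Finset.sum_congr rfl fun j _ => ?_
        simp only [mul_assoc, ← Finset.mul_sum]
        ring
    _ = 0 := by rw [h6, h7, h8, h9, h12, h13]; norm_num

lemma E_V8 (h3 : ∀ i ∈ Icc 1 m, c i = ∑ j ∈ Icc 1 m, a i j)
    (h12 : ∑ i ∈ Icc 1 m, b i * c i ^ 4 = 1 / 5)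
    (h13 : ∑ i ∈ Icc 1 m, ∑ j ∈ Icc 1 m, b i * c i ^ 2 * a i j * c j = 1 / 10)
    (h16 : ∑ i ∈ Icc 1 m, b i * (∑ j ∈ Icc 1 m, a i j * c j) ^ 2 = 1 / 20) :
    elemCoeff m a b c 0 tV8 = 0 := by
  calc elemCoeff m a b c 0 tV8
      = ∑ j ∈ Icc 1 m, b j * (c j ^ 2 / 2 - ∑ l ∈ Icc 1 m, a j l * c l) ^ 2 := by
        rw [tV8, elemCoeff_cons_zero]
        refine Finset.sum_congr rfl fun j hj => ?_
        rw [List.map_cons, List.map_cons, List.map_nil, List.prod_cons,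
          List.prod_cons, List.prod_nil, L1 m a b c h3 j hj]
        ring
    _ = (∑ j ∈ Icc 1 m, b j * c j ^ 4) / 4
        - ∑ j ∈ Icc 1 m, ∑ l ∈ Icc 1 m, b j * c j ^ 2 * a j l * c l
        + ∑ j ∈ Icc 1 m, b j * (∑ l ∈ Icc 1 m, a j l * c l) ^ 2 := by
        simp only [Finset.sum_div, Finset.mul_sum]
        simp only [← Finset.sum_sub_distrib, ← Finset.sum_add_distrib]
        refine Finset.sum_congr rfl fun j _ => ?_
        simp only [mul_assoc, ← Finset.mul_sum]
        ring
    _ = 0 := by rw [h12, h13, h16]; norm_num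

end Eval

lemma part1_aux (m : ℕ) (a : ℕ → ℕ → ℝ) (b c : ℕ → ℝ)
    (h3 : ∀ i, 1 ≤ i → i ≤ m → c i = ∑ j ∈ Icc 1 m, a i j)
    (h4 : ∑ i ∈ Icc 1 m, b i = 1) :
    ∀ i ≤ m, elemCoeff m a b c i (LNTree.node 0 []) = 0 := by
  intro i hi
  rcases Nat.eq_zero_or_pos i with rfl | hpos
  · rw [elemCoeff_nil_zero]
    simp [h4]
  · rw [elemCoeff_nil m a b c (by omega)]
    have := h3 i hpos hi
    simp [← this]

lemma numCond_mono {w r : ℕ} (h3 : 1 ≤ w) (h1 : w ≤ r) (h2 : r ≤ 5) :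
    numCond w ≤ numCond r := by
  have hw5 : w ≤ 5 := le_trans h1 h2
  interval_cases w <;> interval_cases r <;> norm_num [numCond]

/-- For each `r ∈ {1,…,5}`: the `r`th-order conditions of Table 1 imply the simplified
order condition `C(r)`: `A_i^m([ ]_0) = 0` for every `i = 0,…,m`, and `A_0^m(Υ) = 0`
for every ULN-tree `Υ ∈ T_{r−}` (evaluated on any representative). -/
theorem stmt_12 (m : ℕ) (hm : 1 ≤ m) (a : ℕ → ℕ → ℝ) (b c : ℕ → ℝ) :
    ∀ r : ℕ, 1 ≤ r → r ≤ 5 →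
      (∀ n, 1 ≤ n → n ≤ numCond r → tableCond m a b c n) →
      ((∀ i ≤ m, elemCoeff m a b c i (LNTree.node 0 []) = 0) ∧
        ∀ S ∈ ULNTrMinus r, ∀ t ∈ S, elemCoeff m a b c 0 t = 0) := by
  intro r hr1 hr5 hcond
  have h4le : 4 ≤ numCond r := by interval_cases r <;> norm_num [numCond]
  have hC : ∀ w, 1 ≤ w → w ≤ r → ∀ n, 1 ≤ n → n ≤ numCond w → tableCond m a b c n :=
    fun w hw1 hwr n hn1 hn2 => hcond n hn1 (le_trans hn2 (numCond_mono hw1 hwr hr5))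
  have hc1 : tableCond m a b c 1 := hcond 1 (by omega) (by omega)
  simp only [tableCond] at hc1
  have hc0 : c 0 = 1 := hc1.2.1
  have h3 : tableCond m a b c 3 := hcond 3 (by omega) (by omega)
  simp only [tableCond] at h3
  have h3' : ∀ i ∈ Icc 1 m, c i = ∑ j ∈ Icc 1 m, a i j := by
    intro i hi; rw [mem_Icc] at hi; exact h3 i hi.1 hi.2
  have h4 : tableCond m a b c 4 := hcond 4 (by omega) (by omega)
  simp only [tableCond] at h4
  refine ⟨part1_aux m a b c h3 h4, ?_⟩
  intro S hS t ht
  obtain ⟨⟨t0, ho0, rfl⟩, hnb⟩ := hS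
  have hEq : LNEquiv t t0 := ht
  have hord : t.order ≤ r := by rw [lnequiv_order hEq]; exact ho0
  have hne : ¬ IsBranch (LNTree.node 0 []) t := by
    intro hbr
    exact hnb ⟨LNTree.node 0 [], t, rfl, (eqClass_eq_of_equiv hEq).symm, hbr⟩
  have h5t : t.order ≤ 5 := le_trans hord hr5
  have getC : ∀ w, 1 ≤ w → w ≤ r → ∀ n, 1 ≤ n → n ≤ numCond w → tableCond m a b c n := hC
  rcases cls5 hne h5t with rfl|rfl|rfl|rfl|rfl|rfl|rfl|rfl|rfl|rfl|rfl|rfl|rfl|rfl|rfl|rfl|rfl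
  · exact E_N0 m a b c h4
  · -- tN 1, order 2
    have hw : 2 ≤ r := by simpa [tN, order_node] using hord
    have h5 := getC 2 (by omega) hw 5 (by omega) (by norm_num [numCond])
    simp only [tableCond] at h5
    exact E_N1 m a b c hc0 h4 h5
  · -- tN 2, order 3
    have hw : 3 ≤ r := by simpa [tN, order_node] using hord
    have h5 := getC 3 (by omega) hw 5 (by omega) (by norm_num [numCond])
    have h6 := getC 3 (by omega) hw 6 (by omega) (by norm_num [numCond])
    simp only [tableCond] at h5 h6
    exact E_N2 m a b c hc0 h4 h5 h6
  · -- tN 3, order 4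
    have hw : 4 ≤ r := by simpa [tN, order_node] using hord
    have h5 := getC 4 (by omega) hw 5 (by omega) (by norm_num [numCond])
    have h6 := getC 4 (by omega) hw 6 (by omega) (by norm_num [numCond])
    have h8 := getC 4 (by omega) hw 8 (by omega) (by norm_num [numCond])
    simp only [tableCond] at h5 h6 h8
    exact E_N3 m a b c hc0 h4 h5 h6 h8
  · -- tN 4, order 5
    have hw : 5 ≤ r := by simpa [tN, order_node] using hord
    have h5 := getC 5 (by omega) hw 5 (by omega) (by norm_num [numCond])
    have h6 := getC 5 (by omega) hw 6 (by omega) (by norm_num [numCond])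
    have h8 := getC 5 (by omega) hw 8 (by omega) (by norm_num [numCond])
    have h12 := getC 5 (by omega) hw 12 (by omega) (by norm_num [numCond])
    simp only [tableCond] at h5 h6 h8 h12
    exact E_N4 m a b c hc0 h4 h5 h6 h8 h12
  · -- tU1, order 3
    have hw : 3 ≤ r := by simpa [tU1, tN, order_node] using hord
    have h6 := getC 3 (by omega) hw 6 (by omega) (by norm_num [numCond])
    have h7 := getC 3 (by omega) hw 7 (by omega) (by norm_num [numCond])
    simp only [tableCond] at h6 h7
    exact E_U1 m a b c h3' h6 h7
  · -- tU2, order 4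
    have hw : 4 ≤ r := by simpa [tU2, tN, order_node] using hord
    have h8 := getC 4 (by omega) hw 8 (by omega) (by norm_num [numCond])
    have h9 := getC 4 (by omega) hw 9 (by omega) (by norm_num [numCond])
    have h10 := getC 4 (by omega) hw 10 (by omega) (by norm_num [numCond])
    simp only [tableCond] at h8 h9 h10
    exact E_U2 m a b c h3' h8 h9 h10
  · -- tU3, order 4
    have hw : 4 ≤ r := by simpa [tU3, tN, order_node] using hord
    have h6 := getC 4 (by omega) hw 6 (by omega) (by norm_num [numCond])
    have h7 := getC 4 (by omega) hw 7 (by omega) (by norm_num [numCond])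
    have h8 := getC 4 (by omega) hw 8 (by omega) (by norm_num [numCond])
    have h9 := getC 4 (by omega) hw 9 (by omega) (by norm_num [numCond])
    simp only [tableCond] at h6 h7 h8 h9
    exact E_U3 m a b c hc0 h3' h6 h7 h8 h9
  · -- tU4, order 4
    have hw : 4 ≤ r := by simpa [tU4, tU1, tN, order_node] using hord
    have h10 := getC 4 (by omega) hw 10 (by omega) (by norm_num [numCond])
    have h11 := getC 4 (by omega) hw 11 (by omega) (by norm_num [numCond])
    simp only [tableCond] at h10 h11
    exact E_U4 m a b c h3' h10 h11
  · -- tV1, order 5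
    have hw : 5 ≤ r := by simpa [tV1, tN, order_node] using hord
    have h12 := getC 5 (by omega) hw 12 (by omega) (by norm_num [numCond])
    have h13 := getC 5 (by omega) hw 13 (by omega) (by norm_num [numCond])
    have h14 := getC 5 (by omega) hw 14 (by omega) (by norm_num [numCond])
    have h17 := getC 5 (by omega) hw 17 (by omega) (by norm_num [numCond])
    simp only [tableCond] at h12 h13 h14 h17
    exact E_V1 m a b c h3' h12 h13 h14 h17
  · -- tV2
    have hw : 5 ≤ r := by simpa [tV2, tU2, tN, order_node] using hord
    have h17 := getC 5 (by omega) hw 17 (by omega) (by norm_num [numCond])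
    have h18 := getC 5 (by omega) hw 18 (by omega) (by norm_num [numCond])
    have h19 := getC 5 (by omega) hw 19 (by omega) (by norm_num [numCond])
    simp only [tableCond] at h17 h18 h19
    exact E_V2 m a b c h3' h17 h18 h19
  · -- tV3
    have hw : 5 ≤ r := by simpa [tV3, tU3, tN, order_node] using hord
    have h14 := getC 5 (by omega) hw 14 (by omega) (by norm_num [numCond])
    have h15 := getC 5 (by omega) hw 15 (by omega) (by norm_num [numCond])
    have h17 := getC 5 (by omega) hw 17 (by omega) (by norm_num [numCond])
    have h18 := getC 5 (by omega) hw 18 (by omega) (by norm_num [numCond])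
    simp only [tableCond] at h14 h15 h17 h18
    exact E_V3 m a b c h3' h14 h15 h17 h18
  · -- tV4
    have hw : 5 ≤ r := by simpa [tV4, tU4, tU1, tN, order_node] using hord
    have h19 := getC 5 (by omega) hw 19 (by omega) (by norm_num [numCond])
    have h20 := getC 5 (by omega) hw 20 (by omega) (by norm_num [numCond])
    simp only [tableCond] at h19 h20
    exact E_V4 m a b c h3' h19 h20
  · -- tV5
    have hw : 5 ≤ r := by simpa [tV5, tN, order_node] using hord
    have h8 := getC 5 (by omega) hw 8 (by omega) (by norm_num [numCond])
    have h9 := getC 5 (by omega) hw 9 (by omega) (by norm_num [numCond])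
    have h10 := getC 5 (by omega) hw 10 (by omega) (by norm_num [numCond])
    have h12 := getC 5 (by omega) hw 12 (by omega) (by norm_num [numCond])
    have h13 := getC 5 (by omega) hw 13 (by omega) (by norm_num [numCond])
    have h14 := getC 5 (by omega) hw 14 (by omega) (by norm_num [numCond])
    simp only [tableCond] at h8 h9 h10 h12 h13 h14
    exact E_V5 m a b c hc0 h3' h8 h9 h10 h12 h13 h14
  · -- tV6
    have hw : 5 ≤ r := by simpa [tV6, tU1, tN, order_node] using hord
    have h10 := getC 5 (by omega) hw 10 (by omega) (by norm_num [numCond])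
    have h11 := getC 5 (by omega) hw 11 (by omega) (by norm_num [numCond])
    have h14 := getC 5 (by omega) hw 14 (by omega) (by norm_num [numCond])
    have h15 := getC 5 (by omega) hw 15 (by omega) (by norm_num [numCond])
    simp only [tableCond] at h10 h11 h14 h15
    exact E_V6 m a b c hc0 h3' h10 h11 h14 h15
  · -- tV7
    have hw : 5 ≤ r := by simpa [tV7, tN, order_node] using hord
    have h6 := getC 5 (by omega) hw 6 (by omega) (by norm_num [numCond])
    have h7 := getC 5 (by omega) hw 7 (by omega) (by norm_num [numCond])
    have h8 := getC 5 (by omega) hw 8 (by omega) (by norm_num [numCond])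
    have h9 := getC 5 (by omega) hw 9 (by omega) (by norm_num [numCond])
    have h12 := getC 5 (by omega) hw 12 (by omega) (by norm_num [numCond])
    have h13 := getC 5 (by omega) hw 13 (by omega) (by norm_num [numCond])
    simp only [tableCond] at h6 h7 h8 h9 h12 h13
    exact E_V7 m a b c hc0 h3' h6 h7 h8 h9 h12 h13
  · -- tV8
    have hw : 5 ≤ r := by simpa [tV8, tN, order_node] using hord
    have h12 := getC 5 (by omega) hw 12 (by omega) (by norm_num [numCond])
    have h13 := getC 5 (by omega) hw 13 (by omega) (by norm_num [numCond])
    have h16 := getC 5 (by omega) hw 16 (by omega) (by norm_num [numCond])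
    simp only [tableCond] at h12 h13 h16
    exact E_V8 m a b c h3' h12 h13 h16
end

section
/- Explicit order barrier: there exist no real coefficients a_{ij} (1 ≤ i,j ≤ 4), b_i (1 ≤ i ≤ 4), c_i (0 ≤ i ≤ 4) with m = 4 satisfying all of conditions (1)–(11) of Table 1; indeed, any m = 4 coefficients satisfying conditions (2)–(11) must have c₁ = 1, which contradicts condition (1). Consequently no 4th-order instance of the explicit Runge–Kutta scheme for BSDEs exists with m ≤ 4 stages. -/
private lemma sumIcc1 (f : ℕ → ℝ) : ∑ i ∈ Finset.Icc 1 1, f i = f 1 := by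
  simp

private lemma sumIcc2 (f : ℕ → ℝ) : ∑ i ∈ Finset.Icc 1 2, f i = f 1 + f 2 := by
  rw [show (Finset.Icc 1 2 : Finset ℕ) = {1,2} from by decide]
  simp [Finset.sum_insert, Finset.mem_insert]

private lemma sumIcc3 (f : ℕ → ℝ) : ∑ i ∈ Finset.Icc 1 3, f i = f 1 + f 2 + f 3 := by
  rw [show (Finset.Icc 1 3 : Finset ℕ) = {1,2,3} from by decide]
  simp [Finset.sum_insert, Finset.mem_insert]
  try ring

private lemma sumIcc4 (f : ℕ → ℝ) : ∑ i ∈ Finset.Icc 1 4, f i = f 1 + f 2 + f 3 + f 4 := by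
  rw [show (Finset.Icc 1 4 : Finset ℕ) = {1,2,3,4} from by decide]
  simp [Finset.sum_insert, Finset.mem_insert]
  try ring

private lemma key41 (a : ℕ → ℕ → ℝ) (b c : ℕ → ℝ)
    (h : ∀ n, 2 ≤ n → n ≤ 11 → tableCond 4 a b c n) : c 1 = 1 := by
  have h2 : ∀ i j, 1 ≤ j → j ≤ i → i ≤ 4 → a i j = 0 := h 2 (by norm_num) (by norm_num)
  have z11 : a 1 1 = 0 := h2 1 1 le_rfl le_rfl (by norm_num)
  have z21 : a 2 1 = 0 := h2 2 1 le_rfl (by norm_num) (by norm_num)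
  have z22 : a 2 2 = 0 := h2 2 2 (by norm_num) le_rfl (by norm_num)
  have z31 : a 3 1 = 0 := h2 3 1 le_rfl (by norm_num) (by norm_num)
  have z32 : a 3 2 = 0 := h2 3 2 (by norm_num) (by norm_num) (by norm_num)
  have z33 : a 3 3 = 0 := h2 3 3 (by norm_num) le_rfl (by norm_num)
  have z41 : a 4 1 = 0 := h2 4 1 le_rfl (by norm_num) (by norm_num)
  have z42 : a 4 2 = 0 := h2 4 2 (by norm_num) (by norm_num) (by norm_num)
  have z43 : a 4 3 = 0 := h2 4 3 (by norm_num) (by norm_num) (by norm_num)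
  have z44 : a 4 4 = 0 := h2 4 4 (by norm_num) le_rfl (by norm_num)
  have h3 : ∀ i, 1 ≤ i → i ≤ 4 → c i = ∑ j ∈ Finset.Icc 1 4, a i j :=
    h 3 (by norm_num) (by norm_num)
  have hc4 : c 4 = 0 := by
    rw [h3 4 (by norm_num) le_rfl, sumIcc4, z41, z42, z43, z44]; ring
  have h5 := h 5 (by norm_num) (by norm_num)
  have h6 := h 6 (by norm_num) (by norm_num)
  have h7 := h 7 (by norm_num) (by norm_num)
  have h8 := h 8 (by norm_num) (by norm_num)
  have h9 := h 9 (by norm_num) (by norm_num)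
  have h10 := h 10 (by norm_num) (by norm_num)
  have h11 := h 11 (by norm_num) (by norm_num)
  simp only [tableCond] at h5 h6 h7 h8 h9 h10 h11
  simp only [sumIcc4] at h5 h6 h7 h8 h9 h10 h11
  simp only [z11, z21, z22, z31, z32, z33, z41, z42, z43, z44, hc4,
    mul_zero, zero_mul, add_zero, zero_add] at h5 h6 h7 h8 h9 h10 h11
  have key : c 3 * (c 1 - 1) = 0 := by
    linear_combination
      (-144 * (b 2 * a 2 3 * c 3 * (c 2 - c 1))) * h10
      + (144 * (b 2 * a 2 3 * c 3 * (c 2 - c 1)) * c 3 + 12 * c 1 * (1 - 2 * c 3)) * h7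
      + (-12 * (1 - 2 * c 3)) * h9
      + 6 * h8
      + (-6 * (c 1 + c 3)) * h6
      + (6 * c 1 * c 3) * h5
      + (144 * b 2 * c 2 * (c 2 - c 1) * (c 2 - c 3)) * h11
  rcases mul_eq_zero.mp key with h0 | h0
  · exfalso
    have : (1 : ℝ) / 24 = 0 := by
      linear_combination -h11 + (b 1 * a 1 2 * a 2 3) * h0
    norm_num at this
  · linarith

/-- Explicit order barrier.  Any `m = 4` coefficients satisfying conditions (2)–(11) of
Table 1 must have `c₁ = 1`, contradicting condition (1); consequently, for every
`m ≤ 4`, there are no coefficients satisfying all of conditions (1)–(11), i.e. no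
4th-order instance of the explicit Runge–Kutta scheme for BSDEs exists with `m ≤ 4`
stages. -/
theorem stmt_15 :
    (∀ (a : ℕ → ℕ → ℝ) (b c : ℕ → ℝ),
        (∀ n, 2 ≤ n → n ≤ 11 → tableCond 4 a b c n) → c 1 = 1) ∧
    (∀ m : ℕ, 1 ≤ m → m ≤ 4 →
        ¬ ∃ (a : ℕ → ℕ → ℝ) (b c : ℕ → ℝ),
            ∀ n, 1 ≤ n → n ≤ 11 → tableCond m a b c n) := by
  constructor
  · exact key41
  · intro m hm1 hm4 ⟨a, b, c, hh⟩
    have h1 := hh 1 le_rfl (by norm_num)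
    simp only [tableCond] at h1
    interval_cases m
    · -- m = 1
      have h5 := hh 5 (by norm_num) (by norm_num)
      simp only [tableCond, sumIcc1] at h5
      rw [h1.1] at h5
      norm_num at h5
    · -- m = 2
      have h2 : ∀ i j, 1 ≤ j → j ≤ i → i ≤ 2 → a i j = 0 := hh 2 (by norm_num) (by norm_num)
      have h7 := hh 7 (by norm_num) (by norm_num)
      simp only [tableCond, sumIcc2] at h7
      rw [h2 1 1 le_rfl le_rfl (by norm_num), h2 2 1 le_rfl (by norm_num) (by norm_num),
        h2 2 2 (by norm_num) le_rfl (by norm_num), h1.1] at h7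
      norm_num at h7
    · -- m = 3
      have h2 : ∀ i j, 1 ≤ j → j ≤ i → i ≤ 3 → a i j = 0 := hh 2 (by norm_num) (by norm_num)
      have h11 := hh 11 (by norm_num) (by norm_num)
      simp only [tableCond, sumIcc3] at h11
      rw [h2 1 1 le_rfl le_rfl (by norm_num), h2 2 1 le_rfl (by norm_num) (by norm_num),
        h2 2 2 (by norm_num) le_rfl (by norm_num), h2 3 1 le_rfl (by norm_num) (by norm_num),
        h2 3 2 (by norm_num) (by norm_num) (by norm_num),
        h2 3 3 (by norm_num) le_rfl (by norm_num), h1.1] at h11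
      norm_num at h11
    · -- m = 4
      have hc1 : c 1 = 1 := key41 a b c (fun n hn hn' => hh n (by omega) hn')
      have hlt := h1.2.2 1 le_rfl (by norm_num)
      norm_num [h1.2.1] at hlt
      linarith
end
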